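/- If g(U) = vec(U)ᵀ(C ⊗ C)vec(U) is convex on U(h,h), then the semi-relaxed GW barycenter problem min_{C̄ ∈ R^{n×n}} min_{T ∈ U_n(h)} ∑_{ijkl}(C_{ij}−C̄_{kl})² T_{ik}T_{jl} admits an optimal transport plan that is a scaled membership matrix, i.e., of the form diag(h)·M with M ∈ {0,1}^{N×n} having exactly one 1 per row. -/

import Mathlib

open Matrix BigOperators Kronecker

noncomputable def GWEnergy {N n : ℕ} (C : Matrix (Fin N) (Fin N) ℝ)
    (D : Matrix (Fin n) (Fin n) ℝ) (T : Matrix (Fin N) (Fin n) ℝ) : ℝ :=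
  ∑ i, ∑ j, ∑ k, ∑ l, (C i j - D k l) ^ 2 * T i k * T j l


open Finset

namespace SRGWaux


variable {N n : ℕ}

lemma pull2 {α β γ : Type*} [Fintype α] [Fintype β] [Fintype γ]
    (f : α → β → γ → ℝ) :
    ∑ a, ∑ b, ∑ k, f a b k = ∑ k, ∑ a, ∑ b, f a b k := by
  calc ∑ a, ∑ b, ∑ k, f a b k = ∑ a, ∑ k, ∑ b, f a b k :=
        Finset.sum_congr rfl fun a _ => Finset.sum_comm
    _ = ∑ k, ∑ a, ∑ b, f a b k := Finset.sum_comm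

lemma pull3 {α β γ δ : Type*} [Fintype α] [Fintype β] [Fintype γ] [Fintype δ]
    (f : α → β → γ → δ → ℝ) :
    ∑ a, ∑ b, ∑ c, ∑ k, f a b c k = ∑ k, ∑ a, ∑ b, ∑ c, f a b c k := by
  calc ∑ a, ∑ b, ∑ c, ∑ k, f a b c k = ∑ a, ∑ k, ∑ b, ∑ c, f a b c k :=
        Finset.sum_congr rfl fun a _ => pull2 _
    _ = ∑ k, ∑ a, ∑ b, ∑ c, f a b c k := Finset.sum_comm

lemma pull4 {α β γ δ ε : Type*} [Fintype α] [Fintype β] [Fintype γ] [Fintype δ] [Fintype ε]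
    (f : α → β → γ → δ → ε → ℝ) :
    ∑ a, ∑ b, ∑ c, ∑ d, ∑ k, f a b c d k = ∑ k, ∑ a, ∑ b, ∑ c, ∑ d, f a b c d k := by
  calc ∑ a, ∑ b, ∑ c, ∑ d, ∑ k, f a b c d k = ∑ a, ∑ k, ∑ b, ∑ c, ∑ d, f a b c d k :=
        Finset.sum_congr rfl fun a _ => pull3 _
    _ = ∑ k, ∑ a, ∑ b, ∑ c, ∑ d, f a b c d k := Finset.sum_comm

lemma swap4 {α β γ δ : Type*} [Fintype α] [Fintype β] [Fintype γ] [Fintype δ]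
    (f : α → β → γ → δ → ℝ) :
    ∑ a, ∑ b, ∑ c, ∑ d, f a b c d = ∑ c, ∑ d, ∑ a, ∑ b, f a b c d := by
  calc ∑ a, ∑ b, ∑ c, ∑ d, f a b c d = ∑ c, ∑ a, ∑ b, ∑ d, f a b c d := pull2 _
    _ = ∑ c, ∑ d, ∑ a, ∑ b, f a b c d :=
        Finset.sum_congr rfl fun c _ => pull2 _

lemma sum_mul_sum4 {α β γ δ : Type*} [Fintype α] [Fintype β] [Fintype γ] [Fintype δ]
    (p : α → γ → ℝ) (q : β → δ → ℝ) :
    (∑ a, ∑ c, p a c) * (∑ b, ∑ d, q b d) = ∑ a, ∑ b, ∑ c, ∑ d, p a c * q b d := by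
  rw [Finset.sum_mul_sum]
  exact Finset.sum_congr rfl fun a _ => Finset.sum_congr rfl fun b _ =>
    Finset.sum_mul_sum _ _ _ _

/-- The bilinear form `B(X,Y) = ⟨X, C Y Cᵀ⟩`. -/
def Bq (C : Matrix (Fin N) (Fin N) ℝ) (X Y : Fin N → Fin N → ℝ) : ℝ :=
  ∑ a, ∑ b, ∑ c, ∑ d, X a b * (C a c * C b d) * Y c d

variable (C : Matrix (Fin N) (Fin N) ℝ)

lemma Bq_sum_left {ι : Type*} [Fintype ι] (F : ι → Fin N → Fin N → ℝ)
    (Y : Fin N → Fin N → ℝ) :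
    Bq C (fun a b => ∑ k, F k a b) Y = ∑ k, Bq C (F k) Y := by
  unfold Bq
  simp only [Finset.sum_mul]
  exact pull4 _

lemma Bq_sum_right {ι : Type*} [Fintype ι] (X : Fin N → Fin N → ℝ)
    (G : ι → Fin N → Fin N → ℝ) :
    Bq C X (fun c d => ∑ l, G l c d) = ∑ l, Bq C X (G l) := by
  unfold Bq
  simp only [Finset.mul_sum]
  exact pull4 _

lemma Bq_smul_left (r : ℝ) (X Y : Fin N → Fin N → ℝ) :
    Bq C (fun a b => r * X a b) Y = r * Bq C X Y := by
  unfold Bq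
  simp only [mul_assoc, ← Finset.mul_sum]

lemma Bq_smul_right (r : ℝ) (X Y : Fin N → Fin N → ℝ) :
    Bq C X (fun c d => r * Y c d) = r * Bq C X Y := by
  unfold Bq
  have : ∀ a b c d, X a b * (C a c * C b d) * (r * Y c d)
      = r * (X a b * (C a c * C b d) * Y c d) := fun a b c d => by ring
  simp only [this, ← Finset.mul_sum]

lemma Bq_rank1 (x y : Fin N → ℝ) :
    Bq C (fun a b => x a * x b) (fun c d => y c * y d)
      = (∑ a, ∑ c, x a * C a c * y c) * (∑ b, ∑ d, x b * C b d * y d) := by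
  rw [sum_mul_sum4]
  unfold Bq
  refine Finset.sum_congr rfl fun a _ => Finset.sum_congr rfl fun b _ =>
    Finset.sum_congr rfl fun c _ => Finset.sum_congr rfl fun d _ => by ring

lemma Bq_combo {ι κ : Type*} [Fintype ι] [Fintype κ]
    (α : ι → ℝ) (x : ι → Fin N → ℝ) (β : κ → ℝ) (y : κ → Fin N → ℝ) :
    Bq C (fun a b => ∑ k, α k * (x k a * x k b))
        (fun c d => ∑ l, β l * (y l c * y l d))
      = ∑ k, ∑ l, α k * (β l *
          ((∑ a, ∑ c, x k a * C a c * y l c) * (∑ b, ∑ d, x k b * C b d * y l d))) := by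
  rw [Bq_sum_left]
  refine Finset.sum_congr rfl fun k _ => ?_
  rw [Bq_smul_left, Bq_sum_right, Finset.mul_sum]
  refine Finset.sum_congr rfl fun l _ => ?_
  rw [Bq_smul_right, Bq_rank1]

lemma Bq_combo_nonneg {ι κ : Type*} [Fintype ι] [Fintype κ]
    (α : ι → ℝ) (x : ι → Fin N → ℝ) (β : κ → ℝ) (y : κ → Fin N → ℝ)
    (hα : ∀ k, 0 ≤ α k) (hβ : ∀ l, 0 ≤ β l) :
    0 ≤ Bq C (fun a b => ∑ k, α k * (x k a * x k b))
        (fun c d => ∑ l, β l * (y l c * y l d)) := by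
  rw [Bq_combo]
  refine Finset.sum_nonneg fun k _ => Finset.sum_nonneg fun l _ => ?_
  exact mul_nonneg (hα k) (mul_nonneg (hβ l) (mul_self_nonneg _))

lemma Bq_add_left (X X' Y : Fin N → Fin N → ℝ) :
    Bq C (fun a b => X a b + X' a b) Y = Bq C X Y + Bq C X' Y := by
  unfold Bq
  simp only [add_mul, Finset.sum_add_distrib]

lemma Bq_add_right (X Y Y' : Fin N → Fin N → ℝ) :
    Bq C X (fun c d => Y c d + Y' c d) = Bq C X Y + Bq C X Y' := by
  unfold Bq
  simp only [mul_add, Finset.sum_add_distrib]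




variable {N n : ℕ} (C : Matrix (Fin N) (Fin N) ℝ) (h : Fin N → ℝ)

/-- column sums -/
def cs (T : Matrix (Fin N) (Fin n) ℝ) (k : Fin n) : ℝ := ∑ i, T i k

/-- feasibility: nonnegative entries, rows summing to `h` -/
def Feas (T : Matrix (Fin N) (Fin n) ℝ) : Prop :=
  (∀ i k, 0 ≤ T i k) ∧ ∀ i, ∑ k, T i k = h i

lemma cs_nonneg {T : Matrix (Fin N) (Fin n) ℝ} (hT : Feas h T) (k : Fin n) :
    0 ≤ cs T k := Finset.sum_nonneg fun i _ => hT.1 i k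

lemma col_zero {T : Matrix (Fin N) (Fin n) ℝ} (hT : Feas h T) {k : Fin n}
    (hk : cs T k = 0) (i : Fin N) : T i k = 0 := by
  have := (Finset.sum_eq_zero_iff_of_nonneg (fun i _ => hT.1 i k)).1 hk
  exact this i (Finset.mem_univ i)

/-- The induced coupling `U(T) = Σ_k col_k col_kᵀ / a_k`. -/
noncomputable def Umat (T : Matrix (Fin N) (Fin n) ℝ) : Fin N → Fin N → ℝ :=
  fun a b => ∑ k, (cs T k)⁻¹ * (T a k * T b k)

lemma Umat_nonneg {T : Matrix (Fin N) (Fin n) ℝ} (hT : Feas h T) (a b : Fin N) :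
    0 ≤ Umat T a b :=
  Finset.sum_nonneg fun k _ => mul_nonneg (inv_nonneg.2 (cs_nonneg h hT k))
    (mul_nonneg (hT.1 a k) (hT.1 b k))

lemma Umat_symm (T : Matrix (Fin N) (Fin n) ℝ) (a b : Fin N) :
    Umat T a b = Umat T b a := by
  unfold Umat
  exact Finset.sum_congr rfl fun k _ => by ring

lemma Umat_rowsum {T : Matrix (Fin N) (Fin n) ℝ} (hT : Feas h T) (a : Fin N) :
    ∑ b, Umat T a b = h a := by
  unfold Umat
  rw [Finset.sum_comm]
  have : ∀ k : Fin n, ∑ b, (cs T k)⁻¹ * (T a k * T b k) = T a k := by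
    intro k
    have : ∑ b, (cs T k)⁻¹ * (T a k * T b k)
        = (cs T k)⁻¹ * (T a k * cs T k) := by
      rw [← Finset.mul_sum, ← Finset.mul_sum]; rfl
    rw [this]
    rcases eq_or_lt_of_le (cs_nonneg h hT k) with h0 | hpos
    · rw [col_zero h hT h0.symm a]; ring
    · field_simp
  rw [Finset.sum_congr rfl fun k _ => this k]
  exact hT.2 a

lemma Umat_colsum {T : Matrix (Fin N) (Fin n) ℝ} (hT : Feas h T) (b : Fin N) :
    ∑ a, Umat T a b = h b := by
  have : ∀ a, Umat T a b = Umat T b a := fun a => Umat_symm T a b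
  rw [Finset.sum_congr rfl fun a _ => this a]
  exact Umat_rowsum h hT b

/-- `Φ(T) = g(U(T))`. -/
noncomputable def Phi (T : Matrix (Fin N) (Fin n) ℝ) : ℝ := Bq C (Umat T) (Umat T)

/-- `S = Tᵀ C T`. -/
def Smat (T : Matrix (Fin N) (Fin n) ℝ) (k l : Fin n) : ℝ :=
  ∑ a, ∑ c, T a k * C a c * T c l

lemma Phi_eq_gS (T : Matrix (Fin N) (Fin n) ℝ) :
    Phi C T = ∑ k, ∑ l, (Smat C T k l) ^ 2 / (cs T k * cs T l) := by
  unfold Phi Umat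
  rw [Bq_combo C (fun k => (cs T k)⁻¹) (fun k a => T a k)
      (fun l => (cs T l)⁻¹) (fun l c => T c l)]
  refine Finset.sum_congr rfl fun k _ => Finset.sum_congr rfl fun l _ => ?_
  rw [show (Smat C T k l) ^ 2 / (cs T k * cs T l)
      = (Smat C T k l * Smat C T k l) * ((cs T k)⁻¹ * (cs T l)⁻¹) by
    rw [← mul_inv, div_eq_mul_inv, sq]]
  unfold Smat
  ring




variable {N n : ℕ} (C : Matrix (Fin N) (Fin N) ℝ) (h : Fin N → ℝ)

/-- the constant `Σ C_ij² h_i h_j` -/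
def cC : ℝ := ∑ i, ∑ j, (C i j) ^ 2 * (h i * h j)

/-- `gS(T) = Σ_kl S_kl²/(a_k a_l)` -/
noncomputable def gS (T : Matrix (Fin N) (Fin n) ℝ) : ℝ :=
  ∑ k, ∑ l, (Smat C T k l) ^ 2 / (cs T k * cs T l)

lemma energy_eq {T : Matrix (Fin N) (Fin n) ℝ} (hT : Feas h T)
    (D : Matrix (Fin n) (Fin n) ℝ) :
    GWEnergy C D T = cC C h
      - ∑ k, ∑ l, 2 * (D k l * Smat C T k l)
      + ∑ k, ∑ l, (D k l) ^ 2 * (cs T k * cs T l) := by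
  unfold GWEnergy
  have expand : ∀ (i j : Fin N) (k l : Fin n),
      (C i j - D k l) ^ 2 * T i k * T j l
        = (C i j) ^ 2 * (T i k * T j l)
          - 2 * (C i j * D k l) * (T i k * T j l)
          + (D k l) ^ 2 * (T i k * T j l) := by
    intro i j k l; ring
  simp only [expand, Finset.sum_add_distrib, Finset.sum_sub_distrib]
  have eA : ∑ i, ∑ j, ∑ k, ∑ l, (C i j) ^ 2 * (T i k * T j l) = cC C h := by
    unfold cC
    refine Finset.sum_congr rfl fun i _ => Finset.sum_congr rfl fun j _ => ?_
    rw [← hT.2 i, ← hT.2 j, Finset.sum_mul_sum, Finset.mul_sum]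
    exact Finset.sum_congr rfl fun k _ => by rw [Finset.mul_sum]
  have eB : ∑ i, ∑ j, ∑ k, ∑ l, 2 * (C i j * D k l) * (T i k * T j l)
      = ∑ k, ∑ l, 2 * (D k l * Smat C T k l) := by
    rw [swap4]
    refine Finset.sum_congr rfl fun k _ => Finset.sum_congr rfl fun l _ => ?_
    unfold Smat
    simp only [Finset.mul_sum]
    exact Finset.sum_congr rfl fun i _ => Finset.sum_congr rfl fun j _ => by ring
  have eC : ∑ i, ∑ j, ∑ k, ∑ l, (D k l) ^ 2 * (T i k * T j l)
      = ∑ k, ∑ l, (D k l) ^ 2 * (cs T k * cs T l) := by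
    rw [swap4]
    refine Finset.sum_congr rfl fun k _ => Finset.sum_congr rfl fun l _ => ?_
    simp only [← Finset.mul_sum]
    congr 1
    unfold cs
    rw [Finset.sum_mul]
  rw [eA, eB, eC]

lemma term_nonneg {T : Matrix (Fin N) (Fin n) ℝ} (hT : Feas h T)
    (D : Matrix (Fin n) (Fin n) ℝ) (k l : Fin n) :
    0 ≤ (D k l) ^ 2 * (cs T k * cs T l) - 2 * (D k l * Smat C T k l)
        + (Smat C T k l) ^ 2 / (cs T k * cs T l) := by
  rcases eq_or_lt_of_le (cs_nonneg h hT k) with h0 | hk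
  · have hS : Smat C T k l = 0 := by
      unfold Smat
      refine Finset.sum_eq_zero fun a _ => Finset.sum_eq_zero fun c _ => ?_
      rw [col_zero h hT h0.symm a]; ring
    rw [hS, ← h0]
    norm_num
  rcases eq_or_lt_of_le (cs_nonneg h hT l) with h0 | hl
  · have hS : Smat C T k l = 0 := by
      unfold Smat
      refine Finset.sum_eq_zero fun a _ => Finset.sum_eq_zero fun c _ => ?_
      rw [col_zero h hT h0.symm c]; ring
    rw [hS, ← h0]
    norm_num
  · have hσ : 0 < cs T k * cs T l := mul_pos hk hl
    have key : (D k l) ^ 2 * (cs T k * cs T l) - 2 * (D k l * Smat C T k l)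
        + (Smat C T k l) ^ 2 / (cs T k * cs T l)
        = (cs T k * cs T l * D k l - Smat C T k l) ^ 2 / (cs T k * cs T l) := by
      field_simp
      ring
    rw [key]
    positivity

lemma E_lower {T : Matrix (Fin N) (Fin n) ℝ} (hT : Feas h T)
    (D : Matrix (Fin n) (Fin n) ℝ) :
    cC C h - gS C T ≤ GWEnergy C D T := by
  rw [energy_eq C h hT D]
  have key : 0 ≤ ∑ k, ∑ l, ((D k l) ^ 2 * (cs T k * cs T l)
      - 2 * (D k l * Smat C T k l) + (Smat C T k l) ^ 2 / (cs T k * cs T l)) :=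
    Finset.sum_nonneg fun k _ => Finset.sum_nonneg fun l _ => term_nonneg C h hT D k l
  simp only [Finset.sum_add_distrib, Finset.sum_sub_distrib] at key
  unfold gS
  linarith

/-- the optimal barycenter matrix for a given plan -/
noncomputable def Dopt (T : Matrix (Fin N) (Fin n) ℝ) : Matrix (Fin n) (Fin n) ℝ :=
  Matrix.of fun k l => Smat C T k l / (cs T k * cs T l)

lemma E_opt {T : Matrix (Fin N) (Fin n) ℝ} (hT : Feas h T) :
    GWEnergy C (Dopt C T) T = cC C h - gS C T := by
  rw [energy_eq C h hT (Dopt C T)]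
  have e1 : ∀ k l : Fin n, Dopt C T k l * Smat C T k l
      = (Smat C T k l) ^ 2 / (cs T k * cs T l) := by
    intro k l
    show Smat C T k l / (cs T k * cs T l) * Smat C T k l = _
    rw [div_mul_eq_mul_div, sq]
  have e2 : ∀ k l : Fin n, (Dopt C T k l) ^ 2 * (cs T k * cs T l)
      = (Smat C T k l) ^ 2 / (cs T k * cs T l) := by
    intro k l
    show (Smat C T k l / (cs T k * cs T l)) ^ 2 * (cs T k * cs T l) = _
    rcases eq_or_ne (cs T k * cs T l) 0 with h0 | h0
    · rw [h0]; simp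
    · field_simp
  simp only [e1, e2]
  unfold gS
  have e3 : ∑ k, ∑ l, 2 * ((Smat C T k l) ^ 2 / (cs T k * cs T l))
      = 2 * ∑ k, ∑ l, (Smat C T k l) ^ 2 / (cs T k * cs T l) := by
    simp only [← Finset.mul_sum]
  rw [e3]
  ring




variable {N n : ℕ} (C : Matrix (Fin N) (Fin N) ℝ) (h : Fin N → ℝ)

/-- scalar quadratic-over-linear convexity identity (with junk-value conventions) -/
lemma scalar_id (c1 c2 l m x1 x2 y1 y2 : ℝ)
    (hc1 : 0 ≤ c1) (hc2 : 0 ≤ c2)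
    (hx1 : c1 = 0 → x1 = 0) (hx2 : c1 = 0 → x2 = 0)
    (hy1 : c2 = 0 → y1 = 0) (hy2 : c2 = 0 → y2 = 0)
    (hl : 0 ≤ l) (hm : 0 ≤ m) (hlm : l + m = 1) :
    l * (c1⁻¹ * (x1 * x2)) + m * (c2⁻¹ * (y1 * y2))
      - (l * c1 + m * c2)⁻¹ * ((l * x1 + m * y1) * (l * x2 + m * y2))
    = (l * (m * (c1 * (c2 * (l * c1 + m * c2)))⁻¹))
      * ((c2 * x1 - c1 * y1) * (c2 * x2 - c1 * y2)) := by
  rcases eq_or_lt_of_le hc1 with h1 | h1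
  · -- c1 = 0
    rw [hx1 h1.symm, hx2 h1.symm, ← h1]
    rcases eq_or_lt_of_le hc2 with h2 | h2
    · rw [hy1 h2.symm, hy2 h2.symm, ← h2]; simp
    · rcases eq_or_lt_of_le hm with h3 | h3
      · rw [← h3]; simp
      · have hc2' : c2 ≠ 0 := ne_of_gt h2
        have hm' : m ≠ 0 := ne_of_gt h3
        field_simp
        ring
  · rcases eq_or_lt_of_le hc2 with h2 | h2
    · -- c2 = 0
      rw [hy1 h2.symm, hy2 h2.symm, ← h2]
      rcases eq_or_lt_of_le hl with h3 | h3
      · rw [← h3]; simp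
      · have hc1' : c1 ≠ 0 := ne_of_gt h1
        have hl' : l ≠ 0 := ne_of_gt h3
        field_simp
        ring
    · -- both positive
      have hd : 0 < l * c1 + m * c2 := by
        rcases eq_or_lt_of_le hl with h3 | h3
        · have : m = 1 := by linarith
          rw [← h3, this]; simpa using h2
        · have : 0 < l * c1 := mul_pos h3 h1
          have : 0 ≤ m * c2 := mul_nonneg hm (le_of_lt h2)
          linarith
      have hc1' : c1 ≠ 0 := ne_of_gt h1
      have hc2' : c2 ≠ 0 := ne_of_gt h2
      have hd' : l * c1 + m * c2 ≠ 0 := ne_of_gt hd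
      field_simp
      ring




variable {N n : ℕ} (C : Matrix (Fin N) (Fin N) ℝ) (h : Fin N → ℝ)

lemma cs_comb (T1 T2 : Matrix (Fin N) (Fin n) ℝ) (l m : ℝ) (k : Fin n) :
    cs (fun i k => l * T1 i k + m * T2 i k : Matrix (Fin N) (Fin n) ℝ) k
      = l * cs T1 k + m * cs T2 k := by
  unfold cs
  rw [Finset.sum_add_distrib, ← Finset.mul_sum, ← Finset.mul_sum]

lemma Feas_comb {T1 T2 : Matrix (Fin N) (Fin n) ℝ} (h1 : Feas h T1) (h2 : Feas h T2)
    {l m : ℝ} (hl : 0 ≤ l) (hm : 0 ≤ m) (hlm : l + m = 1) :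
    Feas h (fun i k => l * T1 i k + m * T2 i k : Matrix (Fin N) (Fin n) ℝ) := by
  constructor
  · exact fun i k => add_nonneg (mul_nonneg hl (h1.1 i k)) (mul_nonneg hm (h2.1 i k))
  · intro i
    rw [Finset.sum_add_distrib, ← Finset.mul_sum, ← Finset.mul_sum, h1.2 i, h2.2 i,
      ← add_mul, hlm, one_mul]

/-- translation of the convexity hypothesis's function into `Bq` -/
lemma gconv (U : Matrix (Fin N) (Fin N) ℝ) :
    (∑ p : Fin N × Fin N, ∑ q : Fin N × Fin N,
        U p.1 p.2 * (C ⊗ₖ C) p q * U q.1 q.2) = Bq C U U := by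
  unfold Bq
  rw [Fintype.sum_prod_type]
  refine Finset.sum_congr rfl fun a _ => Finset.sum_congr rfl fun b _ => ?_
  rw [Fintype.sum_prod_type]
  exact Finset.sum_congr rfl fun c _ => Finset.sum_congr rfl fun d _ => by
    rw [Matrix.kroneckerMap_apply]

theorem key_ineq
    (hconv : ConvexOn ℝ
      {U : Matrix (Fin N) (Fin N) ℝ |
        (∀ i j, 0 ≤ U i j) ∧ (∀ i, ∑ j, U i j = h i) ∧ ∀ j, ∑ i, U i j = h j}
      (fun U => ∑ p : Fin N × Fin N, ∑ q : Fin N × Fin N,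
        U p.1 p.2 * (C ⊗ₖ C) p q * U q.1 q.2))
    {T1 T2 : Matrix (Fin N) (Fin n) ℝ} (h1 : Feas h T1) (h2 : Feas h T2)
    {l m : ℝ} (hl : 0 ≤ l) (hm : 0 ≤ m) (hlm : l + m = 1) :
    Phi C (fun i k => l * T1 i k + m * T2 i k : Matrix (Fin N) (Fin n) ℝ)
      ≤ l * Phi C T1 + m * Phi C T2 := by
  set Tm : Matrix (Fin N) (Fin n) ℝ := (fun i k => l * T1 i k + m * T2 i k) with hTmdef
  have hFm : Feas h Tm := Feas_comb h h1 h2 hl hm hlm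
  -- the rank-one correction terms
  set w : Fin n → Fin N → ℝ :=
    fun k a => cs T2 k * T1 a k - cs T1 k * T2 a k with hwdef
  set γ : Fin n → ℝ :=
    fun k => l * (m * (cs T1 k * (cs T2 k * (l * cs T1 k + m * cs T2 k)))⁻¹) with hγdef
  have hγ0 : ∀ k, 0 ≤ γ k := by
    intro k
    refine mul_nonneg hl (mul_nonneg hm (inv_nonneg.2 ?_))
    have d0 : 0 ≤ l * cs T1 k + m * cs T2 k :=
      add_nonneg (mul_nonneg hl (cs_nonneg h h1 k)) (mul_nonneg hm (cs_nonneg h h2 k))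
    exact mul_nonneg (cs_nonneg h h1 k) (mul_nonneg (cs_nonneg h h2 k) d0)
  -- the pointwise decomposition of the defect
  have hδ : ∀ a b, l * Umat T1 a b + m * Umat T2 a b - Umat Tm a b
      = ∑ k, γ k * (w k a * w k b) := by
    intro a b
    simp only [Umat, hTmdef, cs_comb, hwdef, hγdef]
    simp only [Finset.mul_sum]
    rw [← Finset.sum_add_distrib, ← Finset.sum_sub_distrib]
    refine Finset.sum_congr rfl fun k _ => ?_
    exact scalar_id (cs T1 k) (cs T2 k) l m (T1 a k) (T1 b k) (T2 a k) (T2 b k)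
      (cs_nonneg h h1 k) (cs_nonneg h h2 k)
      (fun e => col_zero h h1 e a) (fun e => col_zero h h1 e b)
      (fun e => col_zero h h2 e a) (fun e => col_zero h h2 e b) hl hm hlm
  set Δ : Fin N → Fin N → ℝ := fun a b => ∑ k, γ k * (w k a * w k b) with hΔdef
  have n1 : 0 ≤ Bq C (Umat Tm) Δ :=
    Bq_combo_nonneg C (fun k => (cs Tm k)⁻¹) (fun k a => Tm a k) γ w
      (fun k => inv_nonneg.2 (cs_nonneg h hFm k)) hγ0
  have n2 : 0 ≤ Bq C Δ (Umat Tm) :=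
    Bq_combo_nonneg C γ w (fun k => (cs Tm k)⁻¹) (fun k a => Tm a k)
      hγ0 (fun k => inv_nonneg.2 (cs_nonneg h hFm k))
  have n3 : 0 ≤ Bq C Δ Δ := Bq_combo_nonneg C γ w γ w hγ0 hγ0
  -- convexity hypothesis at the two couplings
  have mem1 : (Umat T1 : Matrix (Fin N) (Fin N) ℝ) ∈
      {U : Matrix (Fin N) (Fin N) ℝ |
        (∀ i j, 0 ≤ U i j) ∧ (∀ i, ∑ j, U i j = h i) ∧ ∀ j, ∑ i, U i j = h j} :=
    ⟨Umat_nonneg h h1, Umat_rowsum h h1, Umat_colsum h h1⟩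
  have mem2 : (Umat T2 : Matrix (Fin N) (Fin N) ℝ) ∈
      {U : Matrix (Fin N) (Fin N) ℝ |
        (∀ i j, 0 ≤ U i j) ∧ (∀ i, ∑ j, U i j = h i) ∧ ∀ j, ∑ i, U i j = h j} :=
    ⟨Umat_nonneg h h2, Umat_rowsum h h2, Umat_colsum h h2⟩
  have hcv := hconv.2 mem1 mem2 hl hm hlm
  simp only [gconv, smul_eq_mul] at hcv
  have hE : (l • (Umat T1 : Matrix (Fin N) (Fin N) ℝ)
      + m • (Umat T2 : Matrix (Fin N) (Fin N) ℝ))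
      = (fun a b => Umat Tm a b + Δ a b : Matrix (Fin N) (Fin N) ℝ) := by
    funext a b
    have := hδ a b
    have h2' : (l • (Umat T1 : Matrix (Fin N) (Fin N) ℝ)
        + m • (Umat T2 : Matrix (Fin N) (Fin N) ℝ)) a b
        = l * Umat T1 a b + m * Umat T2 a b := by
      simp [Matrix.add_apply, Matrix.smul_apply, smul_eq_mul]
    rw [h2']
    linarith
  have hcv : Bq C (fun a b => Umat Tm a b + Δ a b) (fun a b => Umat Tm a b + Δ a b)
      ≤ l * Bq C (Umat T1) (Umat T1) + m * Bq C (Umat T2) (Umat T2) :=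
    le_of_eq_of_le (congrArg (fun X => Bq C X X) hE.symm) (le_of_le_of_eq hcv
      (congrArg₂ (fun x y => l * x + m * y) (gconv C (Umat T1)) (gconv C (Umat T2))))
  have expand : Bq C (fun a b => Umat Tm a b + Δ a b) (fun a b => Umat Tm a b + Δ a b)
      = Bq C (Umat Tm) (Umat Tm)
        + (Bq C (Umat Tm) Δ + (Bq C Δ (Umat Tm) + Bq C Δ Δ)) := by
    rw [Bq_add_left, Bq_add_right, Bq_add_right]
    ring
  rw [expand] at hcv
  unfold Phi
  linarith




variable {N n : ℕ} (C : Matrix (Fin N) (Fin N) ℝ) (h : Fin N → ℝ)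

/-- scaled membership matrix attached to an assignment `σ` -/
def Tmem (σ : Fin N → Fin n) : Matrix (Fin N) (Fin n) ℝ :=
  fun i k => if σ i = k then h i else 0

lemma Tmem_feas (hpos : ∀ i, 0 < h i) (σ : Fin N → Fin n) : Feas h (Tmem h σ) := by
  refine ⟨fun i k => ?_, fun i => ?_⟩
  · unfold Tmem
    split
    · exact le_of_lt (hpos i)
    · exact le_refl 0
  · unfold Tmem
    simp

/-- support of a row -/
noncomputable def supp (T : Matrix (Fin N) (Fin n) ℝ) (i : Fin N) : Finset (Fin n) :=
  Finset.univ.filter fun k => T i k ≠ 0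

/-- total support size -/
noncomputable def sN (T : Matrix (Fin N) (Fin n) ℝ) : ℕ := ∑ i, (supp T i).card

lemma row_ex (hpos : ∀ i, 0 < h i) {T : Matrix (Fin N) (Fin n) ℝ} (hT : Feas h T)
    (i : Fin N) : ∃ k, T i k ≠ 0 := by
  by_contra hc
  push_neg at hc
  have : ∑ k, T i k = 0 := Finset.sum_eq_zero fun k _ => hc k
  rw [hT.2 i] at this
  exact absurd this (ne_of_gt (hpos i))

lemma vertex_case (hpos : ∀ i, 0 < h i) {T : Matrix (Fin N) (Fin n) ℝ}
    (hT : Feas h T) (hvert : ∀ i, (supp T i).card ≤ 1) :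
    ∃ σ : Fin N → Fin n, T = Tmem h σ := by
  have hex : ∀ i, ∃ k, T i k ≠ 0 := row_ex h hpos hT
  choose σ hσ using hex
  have hzero : ∀ i k, k ≠ σ i → T i k = 0 := by
    intro i k hk
    by_contra hc
    have h1 : k ∈ supp T i := Finset.mem_filter.2 ⟨Finset.mem_univ _, hc⟩
    have h2 : σ i ∈ supp T i := Finset.mem_filter.2 ⟨Finset.mem_univ _, hσ i⟩
    have : 1 < (supp T i).card := Finset.one_lt_card.2 ⟨k, h1, σ i, h2, hk⟩
    exact absurd (hvert i) (by omega)
  refine ⟨σ, ?_⟩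
  funext i k
  unfold Tmem
  rcases eq_or_ne (σ i) k with he | he
  · rw [if_pos he, ← he]
    have : ∑ b, T i b = T i (σ i) :=
      Finset.sum_eq_single _ (fun b _ hb => hzero i b hb) (fun hmem => absurd (Finset.mem_univ _) hmem)
    rw [← this, hT.2 i]
  · rw [if_neg he]
    exact hzero i k (Ne.symm he)

lemma round_aux (hpos : ∀ i, 0 < h i)
    (hconv : ConvexOn ℝ
      {U : Matrix (Fin N) (Fin N) ℝ |
        (∀ i j, 0 ≤ U i j) ∧ (∀ i, ∑ j, U i j = h i) ∧ ∀ j, ∑ i, U i j = h j}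
      (fun U => ∑ p : Fin N × Fin N, ∑ q : Fin N × Fin N,
        U p.1 p.2 * (C ⊗ₖ C) p q * U q.1 q.2)) :
    ∀ (m : ℕ) (T : Matrix (Fin N) (Fin n) ℝ), Feas h T → sN T ≤ m →
      ∃ σ : Fin N → Fin n, Phi C T ≤ Phi C (Tmem h σ) := by
  intro m
  induction m with
  | zero =>
    intro T hT hs
    have hvert : ∀ i, (supp T i).card ≤ 1 := by
      intro i
      have h1 : (supp T i).card ≤ sN T := Finset.single_le_sum (f := fun i => (supp T i).card)
        (fun _ _ => Nat.zero_le _) (Finset.mem_univ i)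
      omega
    obtain ⟨σ, hσ⟩ := vertex_case h hpos hT hvert
    exact ⟨σ, le_of_eq (congrArg _ hσ)⟩
  | succ m ih =>
    intro T hT hs
    by_cases hvert : ∀ i, (supp T i).card ≤ 1
    · obtain ⟨σ, hσ⟩ := vertex_case h hpos hT hvert
      exact ⟨σ, le_of_eq (congrArg _ hσ)⟩
    · push_neg at hvert
      obtain ⟨i, hi⟩ := hvert
      obtain ⟨k, hk, k', hk', hkk'⟩ := Finset.one_lt_card.1 hi
      have hik : T i k ≠ 0 := (Finset.mem_filter.1 hk).2
      have hik' : T i k' ≠ 0 := (Finset.mem_filter.1 hk').2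
      have hTikpos : 0 < T i k := lt_of_le_of_ne (hT.1 i k) (Ne.symm hik)
      have hTik'pos : 0 < T i k' := lt_of_le_of_ne (hT.1 i k') (Ne.symm hik')
      have hpair : T i k + T i k' ≤ ∑ b, T i b := by
        rw [← Finset.sum_pair hkk']
        exact Finset.sum_le_sum_of_subset_of_nonneg (Finset.subset_univ _)
          (fun b _ _ => hT.1 i b)
      have hTlt : T i k < h i := by
        rw [hT.2 i] at hpair; linarith
      have hhi : (0:ℝ) < h i := hpos i
      set μ : ℝ := T i k / h i with hμdef
      have hμpos : 0 < μ := div_pos hTikpos hhi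
      have hμlt : μ < 1 := (div_lt_one hhi).2 hTlt
      set l : ℝ := 1 - μ with hldef
      have hlpos : 0 < l := by simp only [hldef]; linarith
      have hlμ : l + μ = 1 := by simp only [hldef]; ring
      have hμh : μ * h i = T i k := div_mul_cancel₀ _ (ne_of_gt hhi)
      set T1 : Matrix (Fin N) (Fin n) ℝ :=
        fun a b => if a = i then (if b = k then 0 else T a b / l) else T a b with hT1def
      set T2 : Matrix (Fin N) (Fin n) ℝ :=
        fun a b => if a = i then (if b = k then h a else 0) else T a b with hT2def
      have hF1 : Feas h T1 := by
        constructor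
        · intro a b
          simp only [hT1def]
          split
          · split
            · exact le_refl 0
            · subst ‹a = i›
              exact div_nonneg (hT.1 a b) (le_of_lt hlpos)
          · exact hT.1 a b
        · intro a
          simp only [hT1def]
          rcases eq_or_ne a i with rfl | ha
          · simp only [eq_self_iff_true, if_true]
            have hsplit : ∀ b : Fin n, (if b = k then (0:ℝ) else T a b / l)
                = T a b / l - (if b = k then T a b / l else 0) := by
              intro b; split <;> simp
            rw [Finset.sum_congr rfl fun b _ => hsplit b, Finset.sum_sub_distrib,
              Finset.sum_ite_eq' Finset.univ k (fun b => T a b / l)]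
            simp only [Finset.mem_univ, if_true, ← Finset.sum_div]
            rw [hT.2 a]
            rw [div_sub_div_same]
            have : h a - T a k = l * h a := by
              simp only [hldef, hμdef]
              field_simp
            rw [this]
            field_simp
          · simp only [if_neg ha]
            exact hT.2 a
      have hF2 : Feas h T2 := by
        constructor
        · intro a b
          simp only [hT2def]
          split
          · split
            · exact le_of_lt (hpos a)
            · exact le_refl 0
          · exact hT.1 a b
        · intro a
          simp only [hT2def]
          rcases eq_or_ne a i with rfl | ha
          · simp only [eq_self_iff_true, if_true]
            rw [Finset.sum_ite_eq' Finset.univ k (fun _ => h a)]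
            simp
          · simp only [if_neg ha]
            exact hT.2 a
      have hcomb : (fun a b => l * T1 a b + μ * T2 a b : Matrix (Fin N) (Fin n) ℝ) = T := by
        funext a b
        simp only [hT1def, hT2def]
        rcases eq_or_ne a i with rfl | ha
        · simp only [eq_self_iff_true, if_true]
          rcases eq_or_ne b k with rfl | hb
          · simp only [eq_self_iff_true, if_true]
            rw [mul_zero, zero_add, hμh]
          · simp only [if_neg hb]
            rw [mul_zero, add_zero, mul_div_cancel₀ _ (ne_of_gt hlpos)]
        · simp only [if_neg ha]
          rw [← add_mul, hlμ, one_mul]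
      -- support accounting
      have hsupp1i : supp T1 i = (supp T i).erase k := by
        ext b
        simp only [supp, Finset.mem_filter, Finset.mem_univ, true_and, Finset.mem_erase,
          hT1def, eq_self_iff_true, if_true]
        rcases eq_or_ne b k with rfl | hb
        · simp
        · rw [if_neg hb, div_ne_zero_iff]
          constructor
          · rintro ⟨h1, _⟩; exact ⟨hb, h1⟩
          · rintro ⟨_, h1⟩; exact ⟨h1, ne_of_gt hlpos⟩
      have hsupp1 : ∀ a, a ≠ i → supp T1 a = supp T a := by
        intro a ha
        unfold supp
        refine Finset.filter_congr fun b _ => ?_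
        simp only [hT1def, if_neg ha]
      have hsupp2i : supp T2 i = {k} := by
        ext b
        simp only [supp, Finset.mem_filter, Finset.mem_univ, true_and, Finset.mem_singleton,
          hT2def, eq_self_iff_true, if_true]
        rcases eq_or_ne b k with rfl | hb
        · simpa using ne_of_gt hhi
        · simp [hb]
      have hsupp2 : ∀ a, a ≠ i → supp T2 a = supp T a := by
        intro a ha
        unfold supp
        refine Finset.filter_congr fun b _ => ?_
        simp only [hT2def, if_neg ha]
      have hcard : 2 ≤ (supp T i).card := hi
      have hsum_split : ∀ (T' : Matrix (Fin N) (Fin n) ℝ),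
          sN T' = ∑ a ∈ Finset.univ.erase i, (supp T' a).card + (supp T' i).card := by
        intro T'
        unfold sN
        rw [← Finset.sum_erase_add _ _ (Finset.mem_univ i)]
      have hs1 : sN T1 ≤ m := by
        have e1 : sN T1 = ∑ a ∈ Finset.univ.erase i, (supp T a).card
            + ((supp T i).card - 1) := by
          rw [hsum_split T1, hsupp1i, Finset.card_erase_of_mem hk,
            Finset.sum_congr rfl fun a ha => congrArg Finset.card
              (hsupp1 a (Finset.ne_of_mem_erase ha))]
        have e2 : sN T = ∑ a ∈ Finset.univ.erase i, (supp T a).card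
            + (supp T i).card := hsum_split T
        omega
      have hs2 : sN T2 ≤ m := by
        have e1 : sN T2 = ∑ a ∈ Finset.univ.erase i, (supp T a).card + 1 := by
          rw [hsum_split T2, hsupp2i, Finset.card_singleton,
            Finset.sum_congr rfl fun a ha => congrArg Finset.card
              (hsupp2 a (Finset.ne_of_mem_erase ha))]
        have e2 : sN T = ∑ a ∈ Finset.univ.erase i, (supp T a).card
            + (supp T i).card := hsum_split T
        omega
      obtain ⟨σ1, hσ1⟩ := ih T1 hF1 hs1
      obtain ⟨σ2, hσ2⟩ := ih T2 hF2 hs2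
      have hkey := key_ineq C h hconv hF1 hF2 (le_of_lt hlpos) (le_of_lt hμpos) hlμ
      rw [hcomb] at hkey
      rcases le_total (Phi C (Tmem h σ1)) (Phi C (Tmem h σ2)) with hc | hc
      · refine ⟨σ2, ?_⟩
        calc Phi C T ≤ l * Phi C T1 + μ * Phi C T2 := hkey
          _ ≤ l * Phi C (Tmem h σ2) + μ * Phi C (Tmem h σ2) :=
              add_le_add (mul_le_mul_of_nonneg_left (le_trans hσ1 hc) hlpos.le)
                (mul_le_mul_of_nonneg_left hσ2 hμpos.le)
          _ = Phi C (Tmem h σ2) := by rw [← add_mul, hlμ, one_mul]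
      · refine ⟨σ1, ?_⟩
        calc Phi C T ≤ l * Phi C T1 + μ * Phi C T2 := hkey
          _ ≤ l * Phi C (Tmem h σ1) + μ * Phi C (Tmem h σ1) :=
              add_le_add (mul_le_mul_of_nonneg_left hσ1 hlpos.le)
                (mul_le_mul_of_nonneg_left (le_trans hσ2 hc) hμpos.le)
          _ = Phi C (Tmem h σ1) := by rw [← add_mul, hlμ, one_mul]


end SRGWaux

open SRGWaux

/-- Theorem 1: if `g(U) = vec(U)ᵀ(C ⊗ C)vec(U)` is convex on `U(h,h)`, then the
semi-relaxed GW barycenter problem `min_{C̄} min_{T ∈ U_n(h)} E(C, C̄, T)` admits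
an optimal transport plan that is a scaled membership matrix `diag(h)·M`. -/
theorem srGW_barycenter_admits_membership_optimum {N n : ℕ}
    (hN : 1 ≤ N) (hn : 1 ≤ n)
    (C : Matrix (Fin N) (Fin N) ℝ) (h : Fin N → ℝ)
    (hpos : ∀ i, 0 < h i) (hsum : ∑ i, h i = 1)
    (hconv : ConvexOn ℝ
      {U : Matrix (Fin N) (Fin N) ℝ |
        (∀ i j, 0 ≤ U i j) ∧ (∀ i, ∑ j, U i j = h i) ∧ ∀ j, ∑ i, U i j = h j}
      (fun U => ∑ p : Fin N × Fin N, ∑ q : Fin N × Fin N,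
        U p.1 p.2 * (C ⊗ₖ C) p q * U q.1 q.2)) :
    ∃ M : Matrix (Fin N) (Fin n) ℝ,
      (∀ i j, M i j = 0 ∨ M i j = 1) ∧ (∀ i, ∃! j, M i j = 1) ∧
      ∃ Dstar : Matrix (Fin n) (Fin n) ℝ,
        ∀ D : Matrix (Fin n) (Fin n) ℝ, ∀ T : Matrix (Fin N) (Fin n) ℝ,
          ((∀ i j, 0 ≤ T i j) ∧ ∀ i, ∑ j, T i j = h i) →
          GWEnergy C Dstar (Matrix.of fun i j => h i * M i j) ≤ GWEnergy C D T := by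
  -- pick a membership assignment maximizing Φ
  haveI : Nonempty (Fin n) := ⟨⟨0, hn⟩⟩
  obtain ⟨σs, -, hmax⟩ := Finset.exists_max_image (Finset.univ : Finset (Fin N → Fin n))
    (fun σ => Phi C (Tmem h σ)) Finset.univ_nonempty
  -- the 0/1 membership matrix
  refine ⟨fun i j => if σs i = j then 1 else 0, ?_, ?_, ?_⟩
  · intro i j
    by_cases he : σs i = j
    · exact Or.inr (by simp [he])
    · exact Or.inl (by simp [he])
  · intro i
    refine ⟨σs i, by simp, fun j hj => ?_⟩
    by_contra hne
    have hj' : (if σs i = j then (1:ℝ) else 0) = 1 := hj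
    rw [if_neg (Ne.symm hne)] at hj'
    exact zero_ne_one hj'
  · -- the scaled membership plan is Tmem h σs
    have hMT : (Matrix.of fun i j => h i * (if σs i = j then (1:ℝ) else 0)) = Tmem h σs := by
      funext i j
      show h i * (if σs i = j then (1:ℝ) else 0) = _
      unfold Tmem
      split
      · rw [mul_one]
      · rw [mul_zero]
    refine ⟨Dopt C (Tmem h σs), fun D T hT => ?_⟩
    have hFT : Feas h T := ⟨hT.1, hT.2⟩
    have hFm : Feas h (Tmem h σs) := Tmem_feas h hpos σs
    rw [hMT, E_opt C h hFm]
    -- Φ(T) ≤ Φ(Tmem σs)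
    obtain ⟨σ0, hσ0⟩ := round_aux C h hpos hconv (sN T) T hFT le_rfl
    have hPhi : Phi C T ≤ Phi C (Tmem h σs) :=
      le_trans hσ0 (hmax σ0 (Finset.mem_univ _))
    have hgS : gS C T ≤ gS C (Tmem h σs) := by
      unfold gS
      rw [← Phi_eq_gS, ← Phi_eq_gS]
      exact hPhi
    have hlow := E_lower C h hFT D
    linarith
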